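/- (Castaing) Let (Ω,𝓕) be a measurable space and E a Polish space. A closed-valued, nonempty-valued map S : Ω ⇉ E is Effros measurable if and only if there exists a countable family of Borel measurable functions x_n : Ω → E such that S(ω) = cl{x_n(ω) : n ∈ ℕ} for each ω ∈ Ω. -/

import Mathlib

open Set

namespace RandomSetPaper

/-- Effros measurability of a set-valued mapping `S : Ω ⇉ E`:
`{ω | S ω ∩ O ≠ ∅}` is measurable for every open `O ⊆ E`. -/
def EffrosMeasurable {Ω E : Type*} [MeasurableSpace Ω] [TopologicalSpace E]
    (S : Ω → Set E) : Prop :=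
  ∀ O : Set E, IsOpen O → MeasurableSet {ω | (S ω ∩ O).Nonempty}

open Metric Filter Topology

private lemma measurable_dfind {Ω : Type*} [MeasurableSpace Ω] (Q : ℕ → Ω → Prop)
    [∀ n ω, Decidable (Q n ω)] [∀ ω, Decidable (∃ n, Q n ω)]
    (hQ : ∀ n, MeasurableSet {ω | Q n ω}) :
    Measurable (fun ω => if h : ∃ n, Q n ω then Nat.find h else 0) := by
  apply measurable_to_countable'
  intro j
  have hset : (fun ω => if h : ∃ n, Q n ω then Nat.find h else 0) ⁻¹' {j}
      = ({ω | Q j ω} ∩ {ω | ∀ i < j, ¬ Q i ω})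
        ∪ ({ω | j = 0} ∩ {ω | ∀ n, ¬ Q n ω}) := by
    ext ω
    simp only [mem_preimage, mem_singleton_iff, mem_union, mem_inter_iff, mem_setOf_eq]
    split_ifs with h
    · rw [Nat.find_eq_iff]
      constructor
      · rintro ⟨h1, h2⟩; exact Or.inl ⟨h1, h2⟩
      · rintro (⟨h1, h2⟩ | ⟨_, h2⟩)
        · exact ⟨h1, h2⟩
        · obtain ⟨n, hn⟩ := h; exact absurd hn (h2 n)
    · push_neg at h
      constructor
      · rintro rfl; exact Or.inr ⟨rfl, fun n => h n⟩
      · rintro (⟨h1, _⟩ | ⟨h1, _⟩)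
        · exact absurd h1 (h j)
        · exact h1.symm
  rw [hset]
  have hm1 : MeasurableSet {ω | ∀ i < j, ¬ Q i ω} := by
    have : {ω | ∀ i < j, ¬ Q i ω} = ⋂ i ∈ {i | i < j}, {ω | Q i ω}ᶜ := by
      ext ω; simp
    rw [this]
    exact MeasurableSet.biInter (to_countable _) fun i _ => (hQ i).compl
  have hm2 : MeasurableSet {ω : Ω | ∀ n, ¬ Q n ω} := by
    have : {ω : Ω | ∀ n, ¬ Q n ω} = ⋂ n, {ω | Q n ω}ᶜ := by
      ext ω; simp
    rw [this]
    exact MeasurableSet.iInter fun n => (hQ n).compl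
  refine MeasurableSet.union (MeasurableSet.inter (hQ j) hm1) (MeasurableSet.inter ?_ hm2)
  by_cases hj : j = 0
  · simp [hj]
  · simp [hj]

/-- Key construction: a measurable selection of an Effros measurable closed-valued map,
which stays within `3 * ε` of `d k` whenever `S ω` meets `ball (d k) ε`. -/
private lemma exists_selection {Ω E : Type*} [MeasurableSpace Ω] [MetricSpace E]
    [CompleteSpace E] [MeasurableSpace E] [BorelSpace E]
    (S : Ω → Set E) (hclosed : ∀ ω, IsClosed (S ω)) (hne : ∀ ω, (S ω).Nonempty)
    (hS : EffrosMeasurable S) (d : ℕ → E) (hd : DenseRange d)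
    (k : ℕ) (ε : ℝ) (hε : 0 < ε) :
    ∃ f : Ω → E, Measurable f ∧ (∀ ω, f ω ∈ S ω) ∧
      ∀ ω, (S ω ∩ ball (d k) ε).Nonempty → dist (f ω) (d k) ≤ 3 * ε := by
  classical
  set r : ℕ → ℝ := fun n => ε / 2 ^ n with hr
  have hrpos : ∀ n, 0 < r n := fun n => div_pos hε (by positivity)
  have hr0 : r 0 = ε := by simp [hr]
  -- the recursion predicates
  set Q : ℕ → ℕ → ℕ → Ω → Prop := fun n a i ω =>
    (S ω ∩ (ball (d i) (r (n + 1)) ∩ ball (d a) (r n))).Nonempty with hQdef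
  set Q0 : ℕ → Ω → Prop := fun j ω => (S ω ∩ ball (d j) ε).Nonempty with hQ0def
  set N : Ω → ℕ → ℕ := fun ω n => Nat.rec
    (if Q0 k ω then k else if h : ∃ j, Q0 j ω then Nat.find h else 0)
    (fun n a => if h : ∃ i, Q n a i ω then Nat.find h else 0) n with hNdef
  have hN0 : ∀ ω, N ω 0 =
      (if Q0 k ω then k else if h : ∃ j, Q0 j ω then Nat.find h else 0) := fun ω => rfl
  have hNs : ∀ ω n, N ω (n + 1) =
      (if h : ∃ i, Q n (N ω n) i ω then Nat.find h else 0) := fun ω n => rfl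
  -- invariant
  have hinv : ∀ ω n, (S ω ∩ ball (d (N ω n)) (r n)).Nonempty := by
    intro ω n
    induction n with
    | zero =>
      rw [hN0, hr0]
      by_cases h : Q0 k ω
      · rw [if_pos h]; exact h
      · rw [if_neg h]
        have hex : ∃ j, Q0 j ω := by
          obtain ⟨s, hsS⟩ := hne ω
          obtain ⟨j, hj⟩ := hd.exists_dist_lt s hε
          exact ⟨j, ⟨s, hsS, mem_ball.2 hj⟩⟩
        rw [dif_pos hex]
        exact Nat.find_spec hex
    | succ n ih =>
      obtain ⟨s, hsS, hsb⟩ := ih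
      obtain ⟨i, hi⟩ := hd.exists_dist_lt s (hrpos (n + 1))
      have hex : ∃ i, Q n (N ω n) i ω := ⟨i, ⟨s, hsS, mem_ball.2 hi, hsb⟩⟩
      rw [hNs, dif_pos hex]
      obtain ⟨s', hs'S, hs'b, _⟩ := Nat.find_spec hex
      exact ⟨s', hs'S, hs'b⟩
  -- consecutive distances
  have hgeo : ∀ ω n, dist (d (N ω n)) (d (N ω (n + 1))) ≤ (3 * ε / 2) * (1 / 2) ^ n := by
    intro ω n
    obtain ⟨s, hsS, hsb⟩ := hinv ω n
    obtain ⟨i, hi⟩ := hd.exists_dist_lt s (hrpos (n + 1))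
    have hex : ∃ i, Q n (N ω n) i ω := ⟨i, ⟨s, hsS, mem_ball.2 hi, hsb⟩⟩
    have hNval : N ω (n + 1) = Nat.find hex := by rw [hNs, dif_pos hex]
    obtain ⟨s', hs'S, hs'b1, hs'b2⟩ := Nat.find_spec hex
    rw [← hNval] at hs'b1
    have h1 : dist s' (d (N ω (n + 1))) < r (n + 1) := mem_ball.1 hs'b1
    have h2 : dist s' (d (N ω n)) < r n := mem_ball.1 hs'b2
    have := dist_triangle (d (N ω n)) s' (d (N ω (n + 1)))
    rw [dist_comm (d (N ω n)) s'] at this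
    have hsum : dist (d (N ω n)) (d (N ω (n + 1))) ≤ r n + r (n + 1) := by linarith
    have hval : r n + r (n + 1) = (3 * ε / 2) * (1 / 2) ^ n := by
      simp only [hr]
      rw [pow_succ]
      field_simp
      ring_nf
      rw [← mul_pow]; norm_num
    linarith [hsum, hval]
  have hcauchy : ∀ ω, CauchySeq (fun n => d (N ω n)) := fun ω =>
    cauchySeq_of_le_geometric (1 / 2) (3 * ε / 2) (by norm_num) (hgeo ω)
  choose f hf using fun ω => cauchySeq_tendsto_of_complete (hcauchy ω)
  -- measurability of N · n
  have hNmeas : ∀ n, Measurable fun ω => N ω n := by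
    intro n
    induction n with
    | zero =>
      have h1 : MeasurableSet {ω | Q0 k ω} := hS _ isOpen_ball
      have h2 : Measurable fun ω => if h : ∃ j, Q0 j ω then Nat.find h else 0 :=
        measurable_dfind Q0 fun j => hS _ isOpen_ball
      simp only [hN0]
      exact Measurable.ite h1 measurable_const h2
    | succ n ih =>
      apply measurable_to_countable'
      intro j
      have hset : (fun ω => N ω (n + 1)) ⁻¹' {j}
          = ⋃ a : ℕ, ((fun ω => N ω n) ⁻¹' {a} ∩
              (fun ω => if h : ∃ i, Q n a i ω then Nat.find h else 0) ⁻¹' {j}) := by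
        ext ω
        simp only [mem_preimage, mem_singleton_iff, mem_iUnion, mem_inter_iff]
        constructor
        · intro h
          exact ⟨N ω n, rfl, by rw [← hNs ω n]; exact h⟩
        · rintro ⟨a, ha, hj⟩
          subst ha
          rw [hNs ω n]
          exact hj
      rw [hset]
      exact MeasurableSet.iUnion fun a =>
        MeasurableSet.inter (ih (measurableSet_singleton a))
          ((measurable_dfind (fun i ω => Q n a i ω)
            fun i => hS _ (isOpen_ball.inter isOpen_ball)) (measurableSet_singleton j))
  have hfmeas : Measurable f := by
    apply measurable_of_tendsto_metrizable
      (f := fun n ω => d (N ω n))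
      (fun n => (measurable_from_top : Measurable d).comp (hNmeas n))
    rw [tendsto_pi_nhds]
    exact hf
  -- membership
  have hrlim : Tendsto r atTop (𝓝 0) := by
    have : r = fun n => ε * (1 / 2) ^ n := by
      funext n; simp [hr, div_eq_mul_inv, inv_pow]
    rw [this]
    simpa using tendsto_const_nhds.mul
      (tendsto_pow_atTop_nhds_zero_of_lt_one (by norm_num) (by norm_num : (1:ℝ)/2 < 1))
  have hmem : ∀ ω, f ω ∈ S ω := by
    intro ω
    rw [← (hclosed ω).closure_eq, Metric.mem_closure_iff]
    intro δ hδ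
    obtain ⟨n1, hn1'⟩ := Metric.tendsto_atTop.1 (hf ω) (δ / 2) (by linarith)
    have h2 : ∀ᶠ n in atTop, r n < δ / 2 :=
      hrlim.eventually (gt_mem_nhds (by linarith : 0 < δ / 2))
    obtain ⟨n2, hn2'⟩ := eventually_atTop.1 h2
    set n := max n1 n2
    have hn1 : dist (d (N ω n)) (f ω) < δ / 2 := hn1' n (le_max_left _ _)
    have hn2 : r n < δ / 2 := hn2' n (le_max_right _ _)
    obtain ⟨s, hsS, hsb⟩ := hinv ω n
    refine ⟨s, hsS, ?_⟩
    have : dist (f ω) s ≤ dist (f ω) (d (N ω n)) + dist (d (N ω n)) s := dist_triangle _ _ _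
    rw [dist_comm (f ω) (d (N ω n))] at this
    rw [dist_comm (d (N ω n)) s] at this
    have := mem_ball.1 hsb
    linarith [mem_ball.1 hsb]
  -- the closeness bound
  refine ⟨f, hfmeas, hmem, fun ω hmeet => ?_⟩
  have hstart : N ω 0 = k := by rw [hN0, if_pos hmeet]
  have hb := dist_le_of_le_geometric_of_tendsto₀ (1 / 2) (3 * ε / 2)
    (by norm_num) (hgeo ω) (hf ω)
  rw [hstart] at hb
  rw [dist_comm]
  calc dist (d k) (f ω) ≤ (3 * ε / 2) / (1 - 1 / 2) := hb
    _ = 3 * ε := by ring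

/-- **Castaing's theorem.** For a measurable space `(Ω, 𝓕)` and a Polish space `E`, a
closed-valued, nonempty-valued map `S : Ω ⇉ E` is Effros measurable if and only if there
is a countable family of Borel functions `xₙ : Ω → E` with
`S ω = cl {xₙ ω : n ∈ ℕ}` for every `ω`. -/
theorem castaing {Ω E : Type*} [MeasurableSpace Ω]
    [MetricSpace E] [TopologicalSpace.SeparableSpace E] [CompleteSpace E]
    [MeasurableSpace E] [BorelSpace E]
    (S : Ω → Set E) (hclosed : ∀ ω, IsClosed (S ω)) (hne : ∀ ω, (S ω).Nonempty) :
    EffrosMeasurable S ↔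
      ∃ x : ℕ → Ω → E, (∀ n, Measurable (x n)) ∧
        ∀ ω, S ω = closure {e | ∃ n, e = x n ω} := by
  constructor
  · intro hS
    by_cases hE : Nonempty E
    · obtain ⟨d, hd⟩ := TopologicalSpace.exists_dense_seq E
      choose f hfm hfS hfd using fun p : ℕ × ℕ =>
        exists_selection S hclosed hne hS d hd p.1 (1 / (p.2 + 1)) (by positivity)
      refine ⟨fun n => f n.unpair, fun n => hfm _, fun ω => ?_⟩
      apply Subset.antisymm
      · intro s hs
        rw [Metric.mem_closure_iff]
        intro δ hδ
        obtain ⟨m, hm⟩ := exists_nat_gt (4 / δ)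
        have hm0 : (0:ℝ) < m := lt_trans (by positivity) hm
        have hmd : 4 / ((m:ℝ) + 1) < δ := by
          rw [div_lt_iff₀ (by linarith)]
          have : 4 / δ < (m:ℝ) + 1 := by linarith
          calc (4:ℝ) = (4 / δ) * δ := by field_simp
            _ < ((m:ℝ) + 1) * δ := by
                apply mul_lt_mul_of_pos_right this hδ
            _ = δ * ((m:ℝ) + 1) := by ring
        obtain ⟨j, hj⟩ := hd.exists_dist_lt s (show (0:ℝ) < 1 / (m + 1) by positivity)
        have hmeet : (S ω ∩ ball (d j) (1 / ((m:ℝ) + 1))).Nonempty :=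
          ⟨s, hs, Metric.mem_ball.2 hj⟩
        have hclose := hfd (j, m) ω (by exact_mod_cast hmeet)
        refine ⟨f (j, m) ω, ⟨Nat.pair j m, by simp⟩, ?_⟩
        have ht : dist s (f (j, m) ω) ≤ dist s (d j) + dist (d j) (f (j, m) ω) :=
          dist_triangle _ _ _
        rw [dist_comm (d j) (f (j, m) ω)] at ht
        have hclose' : dist (f (j, m) ω) (d j) ≤ 3 * (1 / ((m:ℝ) + 1)) := hclose
        have hq : (1:ℝ) / ((m:ℝ) + 1) + 3 * (1 / ((m:ℝ) + 1)) = 4 / ((m:ℝ) + 1) := by ring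
        calc dist s (f (j, m) ω) ≤ 4 / ((m:ℝ) + 1) := by linarith
          _ < δ := hmd
      · apply closure_minimal _ (hclosed ω)
        rintro e ⟨n, rfl⟩
        exact hfS n.unpair ω
    · have hEmpty : IsEmpty E := not_nonempty_iff.1 hE
      have hΩ : IsEmpty Ω := ⟨fun ω => hEmpty.false (hne ω).some⟩
      refine ⟨fun _ ω => isEmptyElim ω, fun n => measurable_of_empty _, fun ω => isEmptyElim ω⟩
  · rintro ⟨x, hxm, hxcl⟩ O hO
    have hset : {ω | (S ω ∩ O).Nonempty} = ⋃ n, x n ⁻¹' O := by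
      ext ω
      simp only [mem_setOf_eq, mem_iUnion, mem_preimage]
      constructor
      · rintro ⟨e, heS, heO⟩
        rw [hxcl ω] at heS
        obtain ⟨e', he'O, n, rfl⟩ := mem_closure_iff.1 heS O hO heO
        exact ⟨n, he'O⟩
      · rintro ⟨n, hn⟩
        exact ⟨x n ω, by rw [hxcl ω]; exact subset_closure ⟨n, rfl⟩, hn⟩
    rw [hset]
    exact MeasurableSet.iUnion fun n => (hxm n) hO.measurableSet

end RandomSetPaper
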